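/- For the central element Ω = q⁻²xyz + (q⁻²γ/(q²−1))x − (q²β/(q²−1))y + (q⁻²α/(q²−1))z of A(α,β,γ) and any n ≥ 1, when Ω^n is expressed in the PBW basis {x^a y^b z^c} ordered by total degree, its leading term is q^{−n(n+1)} x^n y^n z^n (i.e., the coefficient of x^n y^n z^n in Ω^n is (q^{−2})^{n(n+1)/2}, and all other terms have total degree less than 3n). -/

import Mathlib

noncomputable section

open FreeAlgebra

/-- The defining relations of the 3-cyclic quantum Weyl algebra `A(α,β,γ)`:
`xy = q²yx + α`, `xz = q⁻²zx + β`, `yz = q²zy + γ`. -/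
inductive CQWRel (K : Type) [Field K] (q α β γ : K) :
    FreeAlgebra K (Fin 3) → FreeAlgebra K (Fin 3) → Prop
  | xy : CQWRel K q α β γ (ι K (0 : Fin 3) * ι K 1)
      (q ^ 2 • (ι K (1 : Fin 3) * ι K 0) + algebraMap K _ α)
  | xz : CQWRel K q α β γ (ι K (0 : Fin 3) * ι K 2)
      (q⁻¹ ^ 2 • (ι K (2 : Fin 3) * ι K 0) + algebraMap K _ β)
  | yz : CQWRel K q α β γ (ι K (1 : Fin 3) * ι K 2)
      (q ^ 2 • (ι K (2 : Fin 3) * ι K 1) + algebraMap K _ γ)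

/-- The 3-cyclic quantum Weyl algebra `A(α,β,γ)`. -/
abbrev CQW (K : Type) [Field K] (q α β γ : K) := RingQuot (CQWRel K q α β γ)

variable {K : Type} [Field K]

/-- The generator `x` of `A(α,β,γ)`. -/
def Xg (q α β γ : K) : CQW K q α β γ := RingQuot.mkAlgHom K (CQWRel K q α β γ) (ι K 0)

/-- The generator `y` of `A(α,β,γ)`. -/
def Yg (q α β γ : K) : CQW K q α β γ := RingQuot.mkAlgHom K (CQWRel K q α β γ) (ι K 1)

/-- The generator `z` of `A(α,β,γ)`. -/
def Zg (q α β γ : K) : CQW K q α β γ := RingQuot.mkAlgHom K (CQWRel K q α β γ) (ι K 2)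

/-- The central element `Ω = q⁻²xyz + (q⁻²γ/(q²-1))x - (q²β/(q²-1))y + (q⁻²α/(q²-1))z`
of `A(α,β,γ)`, written in the ordering `x < y < z`. -/
def OmegaElt' (q α β γ : K) : CQW K q α β γ :=
  q⁻¹ ^ 2 • (Xg q α β γ * Yg q α β γ * Zg q α β γ) +
    (q⁻¹ ^ 2 * γ / (q ^ 2 - 1)) • Xg q α β γ - (q ^ 2 * β / (q ^ 2 - 1)) • Yg q α β γ +
    (q⁻¹ ^ 2 * α / (q ^ 2 - 1)) • Zg q α β γ


section Aux

variable (q α β γ : K)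

local notation "X" => Xg q α β γ
local notation "Y" => Yg q α β γ
local notation "Z" => Zg q α β γ

/-- PBW monomial. -/
def Mn (a b c : ℕ) : CQW K q α β γ := X ^ a * (Y ^ b * Z ^ c)

/-- Span of PBW monomials of total degree at most `d`. -/
def Sp (d : ℕ) : Submodule K (CQW K q α β γ) :=
  Submodule.span K ((fun p : ℕ × ℕ × ℕ => Mn q α β γ p.1 p.2.1 p.2.2) ''
    {p | p.1 + p.2.1 + p.2.2 ≤ d})

lemma Sp_mono {d e : ℕ} (h : d ≤ e) : Sp q α β γ d ≤ Sp q α β γ e :=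
  Submodule.span_mono (Set.image_mono fun p hp => le_trans hp h)

lemma Mn_mem {a b c d : ℕ} (h : a + b + c ≤ d) : Mn q α β γ a b c ∈ Sp q α β γ d :=
  Submodule.subset_span ⟨(a, b, c), h, rfl⟩

lemma relXY : X * Y = q ^ 2 • (Y * X) + α • (1 : CQW K q α β γ) := by
  have h := RingQuot.mkAlgHom_rel K (CQWRel.xy (K := K) (q := q) (α := α) (β := β) (γ := γ))
  simp only [map_mul, map_add, map_smul, AlgHom.commutes] at h
  simpa [Xg, Yg, Algebra.algebraMap_eq_smul_one] using h

lemma relXZ : X * Z = q⁻¹ ^ 2 • (Z * X) + β • (1 : CQW K q α β γ) := by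
  have h := RingQuot.mkAlgHom_rel K (CQWRel.xz (K := K) (q := q) (α := α) (β := β) (γ := γ))
  simp only [map_mul, map_add, map_smul, AlgHom.commutes] at h
  simpa [Xg, Zg, Algebra.algebraMap_eq_smul_one] using h

lemma relYZ : Y * Z = q ^ 2 • (Z * Y) + γ • (1 : CQW K q α β γ) := by
  have h := RingQuot.mkAlgHom_rel K (CQWRel.yz (K := K) (q := q) (α := α) (β := β) (γ := γ))
  simp only [map_mul, map_add, map_smul, AlgHom.commutes] at h
  simpa [Yg, Zg, Algebra.algebraMap_eq_smul_one] using h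

variable {q}

lemma relYX (hq : q ≠ 0) :
    Y * X = q⁻¹ ^ 2 • (X * Y) + (-(q⁻¹ ^ 2 * α)) • (1 : CQW K q α β γ) := by
  rw [relXY]
  match_scalars <;> field_simp <;> ring

lemma relZX (hq : q ≠ 0) :
    Z * X = q ^ 2 • (X * Z) + (-(q ^ 2 * β)) • (1 : CQW K q α β γ) := by
  rw [relXZ]
  match_scalars <;> field_simp <;> ring

lemma relZY (hq : q ≠ 0) :
    Z * Y = q⁻¹ ^ 2 • (Y * Z) + (-(q⁻¹ ^ 2 * γ)) • (1 : CQW K q α β γ) := by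
  rw [relYZ]
  match_scalars <;> field_simp <;> ring



lemma U1' (hq : q ≠ 0) :
    ∀ b : ℕ, ∃ s : K, Y ^ (b + 1) * X = q⁻¹ ^ (2 * (b + 1)) • (X * Y ^ (b + 1)) + s • Y ^ b
  | 0 => ⟨-(q⁻¹ ^ 2 * α), by simpa using relYX α β γ hq⟩
  | (b + 1) => by
    obtain ⟨s, hs⟩ := U1' hq b
    refine ⟨q⁻¹ ^ (2 * (b + 1)) * (-(q⁻¹ ^ 2 * α)) + s, ?_⟩
    have h1 : Y ^ (b + 1 + 1) * X = Y * (Y ^ (b + 1) * X) := by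
      rw [pow_succ', mul_assoc]
    rw [h1, hs, mul_add, mul_smul_comm, mul_smul_comm, ← mul_assoc, relYX α β γ hq,
      add_mul, smul_mul_assoc, smul_mul_assoc, one_mul, mul_assoc, ← pow_succ', ← pow_succ']
    match_scalars <;> ring

lemma U1 (hq : q ≠ 0) (b : ℕ) :
    ∃ s : K, Y ^ b * X = q⁻¹ ^ (2 * b) • (X * Y ^ b) + s • Y ^ (b - 1) := by
  cases b with
  | zero => exact ⟨0, by simp⟩
  | succ b => simpa using U1' α β γ hq b

lemma U2' (hq : q ≠ 0) :
    ∀ c : ℕ, ∃ s : K, Z ^ (c + 1) * X = q ^ (2 * (c + 1)) • (X * Z ^ (c + 1)) + s • Z ^ c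
  | 0 => ⟨-(q ^ 2 * β), by simpa using relZX α β γ hq⟩
  | (c + 1) => by
    obtain ⟨s, hs⟩ := U2' hq c
    refine ⟨q ^ (2 * (c + 1)) * (-(q ^ 2 * β)) + s, ?_⟩
    have h1 : Z ^ (c + 1 + 1) * X = Z * (Z ^ (c + 1) * X) := by
      rw [pow_succ', mul_assoc]
    rw [h1, hs, mul_add, mul_smul_comm, mul_smul_comm, ← mul_assoc, relZX α β γ hq,
      add_mul, smul_mul_assoc, smul_mul_assoc, one_mul, mul_assoc, ← pow_succ', ← pow_succ']
    match_scalars <;> ring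

lemma U2 (hq : q ≠ 0) (c : ℕ) :
    ∃ s : K, Z ^ c * X = q ^ (2 * c) • (X * Z ^ c) + s • Z ^ (c - 1) := by
  cases c with
  | zero => exact ⟨0, by simp⟩
  | succ c => simpa using U2' α β γ hq c

lemma U3' (hq : q ≠ 0) :
    ∀ c : ℕ, ∃ s : K, Z ^ (c + 1) * Y = q⁻¹ ^ (2 * (c + 1)) • (Y * Z ^ (c + 1)) + s • Z ^ c
  | 0 => ⟨-(q⁻¹ ^ 2 * γ), by simpa using relZY α β γ hq⟩
  | (c + 1) => by
    obtain ⟨s, hs⟩ := U3' hq c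
    refine ⟨q⁻¹ ^ (2 * (c + 1)) * (-(q⁻¹ ^ 2 * γ)) + s, ?_⟩
    have h1 : Z ^ (c + 1 + 1) * Y = Z * (Z ^ (c + 1) * Y) := by
      rw [pow_succ', mul_assoc]
    rw [h1, hs, mul_add, mul_smul_comm, mul_smul_comm, ← mul_assoc, relZY α β γ hq,
      add_mul, smul_mul_assoc, smul_mul_assoc, one_mul, mul_assoc, ← pow_succ', ← pow_succ']
    match_scalars <;> ring

lemma U3 (hq : q ≠ 0) (c : ℕ) :
    ∃ s : K, Z ^ c * Y = q⁻¹ ^ (2 * c) • (Y * Z ^ c) + s • Z ^ (c - 1) := by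
  cases c with
  | zero => exact ⟨0, by simp⟩
  | succ c => simpa using U3' α β γ hq c

lemma MulX (hq : q ≠ 0) (a b c : ℕ) :
    ∃ s t : K, Mn q α β γ a b c * X =
      (q ^ (2 * c) * q⁻¹ ^ (2 * b)) • Mn q α β γ (a + 1) b c +
        s • Mn q α β γ a (b - 1) c + t • Mn q α β γ a b (c - 1) := by
  obtain ⟨s2, h2⟩ := U2 α β γ hq c
  obtain ⟨s1, h1⟩ := U1 α β γ hq b
  refine ⟨q ^ (2 * c) * s1, s2, ?_⟩
  have e1 : Mn q α β γ a b c * X = Xg q α β γ ^ a * (Yg q α β γ ^ b * (Zg q α β γ ^ c * X)) := by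
    rw [Mn, mul_assoc, mul_assoc]
  rw [e1, h2]
  simp only [mul_add, mul_smul_comm]
  rw [← mul_assoc (Yg q α β γ ^ b) (Xg q α β γ) (Zg q α β γ ^ c), h1]
  simp only [Mn, add_mul, smul_mul_assoc, mul_add, mul_smul_comm, smul_smul, pow_succ,
    mul_assoc]
  match_scalars <;> ring

lemma MulY (hq : q ≠ 0) (a b c : ℕ) :
    ∃ s : K, Mn q α β γ a b c * Y =
      q⁻¹ ^ (2 * c) • Mn q α β γ a (b + 1) c + s • Mn q α β γ a b (c - 1) := by
  obtain ⟨s3, h3⟩ := U3 α β γ hq c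
  refine ⟨s3, ?_⟩
  have e1 : Mn q α β γ a b c * Y = Xg q α β γ ^ a * (Yg q α β γ ^ b * (Zg q α β γ ^ c * Y)) := by
    rw [Mn, mul_assoc, mul_assoc]
  rw [e1, h3]
  simp only [Mn, mul_add, mul_smul_comm, pow_succ, mul_assoc]

lemma MulZ (a b c : ℕ) : Mn q α β γ a b c * Z = Mn q α β γ a b (c + 1) := by
  rw [Mn, Mn, pow_succ, mul_assoc, mul_assoc]

lemma exists_r {u v : CQW K q α β γ} {d : ℕ} (h : u - v ∈ Sp q α β γ d) :
    ∃ r ∈ Sp q α β γ d, u = v + r :=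
  ⟨u - v, h, by abel⟩

lemma MulXYZ (hq : q ≠ 0) (a b c : ℕ) :
    ∃ r ∈ Sp q α β γ (a + b + c + 2),
      Mn q α β γ a b c * (X * Y * Z) = q⁻¹ ^ (2 * b) • Mn q α β γ (a + 1) (b + 1) (c + 1) + r := by
  obtain ⟨s, t, hX⟩ := MulX α β γ hq a b c
  obtain ⟨u1, hY1⟩ := MulY α β γ hq (a + 1) b c
  obtain ⟨u2, hY2⟩ := MulY α β γ hq a (b - 1) c
  obtain ⟨u3, hY3⟩ := MulY α β γ hq a b (c - 1)
  have e : Mn q α β γ a b c * (X * Y * Z) = ((Mn q α β γ a b c * X) * Y) * Z := by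
    rw [← mul_assoc, ← mul_assoc]
  refine ⟨(q ^ (2 * c) * q⁻¹ ^ (2 * b) * u1) • Mn q α β γ (a + 1) b (c - 1 + 1) +
      (s * q⁻¹ ^ (2 * c)) • Mn q α β γ a (b - 1 + 1) (c + 1) +
      (s * u2) • Mn q α β γ a (b - 1) (c - 1 + 1) +
      (t * q⁻¹ ^ (2 * (c - 1))) • Mn q α β γ a (b + 1) (c - 1 + 1) +
      (t * u3) • Mn q α β γ a b (c - 1 - 1 + 1), ?_, ?_⟩
  · refine add_mem (add_mem (add_mem (add_mem ?_ ?_) ?_) ?_) ?_ <;>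
      exact Submodule.smul_mem _ _ (Mn_mem q α β γ (by omega))
  · rw [e, hX]
    simp only [add_mul, smul_mul_assoc]
    rw [hY1, hY2, hY3]
    simp only [smul_add, smul_smul, add_mul, smul_mul_assoc, MulZ]
    match_scalars <;> (field_simp; try ring) <;> simp [hq]

lemma mem_mulX (hq : q ≠ 0) {d : ℕ} {u : CQW K q α β γ} (h : u ∈ Sp q α β γ d) :
    u * X ∈ Sp q α β γ (d + 1) := by
  induction h using Submodule.span_induction with
  | mem v hv =>
    obtain ⟨p, hp, rfl⟩ := hv
    obtain ⟨s, t, hX⟩ := MulX α β γ hq p.1 p.2.1 p.2.2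
    rw [hX]
    refine add_mem (add_mem ?_ ?_) ?_ <;>
      exact Submodule.smul_mem _ _ (Mn_mem q α β γ (by simp only [Set.mem_setOf_eq] at hp; omega))
  | zero => simp
  | add x y _ _ hx hy => rw [add_mul]; exact add_mem hx hy
  | smul a x _ hx => rw [smul_mul_assoc]; exact Submodule.smul_mem _ _ hx

lemma mem_mulY (hq : q ≠ 0) {d : ℕ} {u : CQW K q α β γ} (h : u ∈ Sp q α β γ d) :
    u * Y ∈ Sp q α β γ (d + 1) := by
  induction h using Submodule.span_induction with
  | mem v hv =>
    obtain ⟨p, hp, rfl⟩ := hv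
    obtain ⟨s, hY⟩ := MulY α β γ hq p.1 p.2.1 p.2.2
    rw [hY]
    refine add_mem ?_ ?_ <;>
      exact Submodule.smul_mem _ _ (Mn_mem q α β γ (by simp only [Set.mem_setOf_eq] at hp; omega))
  | zero => simp
  | add x y _ _ hx hy => rw [add_mul]; exact add_mem hx hy
  | smul a x _ hx => rw [smul_mul_assoc]; exact Submodule.smul_mem _ _ hx

lemma mem_mulZ {d : ℕ} {u : CQW K q α β γ} (h : u ∈ Sp q α β γ d) :
    u * Z ∈ Sp q α β γ (d + 1) := by
  induction h using Submodule.span_induction with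
  | mem v hv =>
    obtain ⟨p, hp, rfl⟩ := hv
    rw [MulZ]
    exact Mn_mem q α β γ (by simp only [Set.mem_setOf_eq] at hp; omega)
  | zero => simp
  | add x y _ _ hx hy => rw [add_mul]; exact add_mem hx hy
  | smul a x _ hx => rw [smul_mul_assoc]; exact Submodule.smul_mem _ _ hx

lemma mem_mulOmega (hq : q ≠ 0) {d : ℕ} {u : CQW K q α β γ} (h : u ∈ Sp q α β γ d) :
    u * OmegaElt' q α β γ ∈ Sp q α β γ (d + 3) := by
  rw [OmegaElt']
  have hX3 : u * (X * Y * Z) ∈ Sp q α β γ (d + 3) := by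
    rw [← mul_assoc, ← mul_assoc]
    exact mem_mulZ α β γ (mem_mulY α β γ hq (mem_mulX α β γ hq h))
  have h1 : u * X ∈ Sp q α β γ (d + 3) :=
    Sp_mono q α β γ (by omega) (mem_mulX α β γ hq h)
  have h2 : u * Y ∈ Sp q α β γ (d + 3) :=
    Sp_mono q α β γ (by omega) (mem_mulY α β γ hq h)
  have h3 : u * Z ∈ Sp q α β γ (d + 3) := Sp_mono q α β γ (by omega) (mem_mulZ α β γ h)
  simp only [mul_add, mul_sub, mul_smul_comm]
  exact add_mem (sub_mem (add_mem (Submodule.smul_mem _ _ hX3) (Submodule.smul_mem _ _ h1))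
    (Submodule.smul_mem _ _ h2)) (Submodule.smul_mem _ _ h3)

lemma key (hq : q ≠ 0) (n : ℕ) : ∃ r ∈ Sp q α β γ (3 * n + 2),
    OmegaElt' q α β γ ^ (n + 1) =
      q⁻¹ ^ ((n + 1) * (n + 2)) • Mn q α β γ (n + 1) (n + 1) (n + 1) + r := by
  induction n with
  | zero =>
    refine exists_r α β γ ?_
    have hX : (X : CQW K q α β γ) ∈ Sp q α β γ 2 := by
      have : (X : CQW K q α β γ) = Mn q α β γ 1 0 0 := by rw [Mn]; simp
      rw [this]; exact Mn_mem q α β γ (by omega)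
    have hY : (Y : CQW K q α β γ) ∈ Sp q α β γ 2 := by
      have : (Y : CQW K q α β γ) = Mn q α β γ 0 1 0 := by rw [Mn]; simp
      rw [this]; exact Mn_mem q α β γ (by omega)
    have hZ : (Z : CQW K q α β γ) ∈ Sp q α β γ 2 := by
      have : (Z : CQW K q α β γ) = Mn q α β γ 0 0 1 := by rw [Mn]; simp
      rw [this]; exact Mn_mem q α β γ (by omega)
    have e : OmegaElt' q α β γ ^ (0 + 1) -
        q⁻¹ ^ ((0 + 1) * (0 + 2)) • Mn q α β γ (0 + 1) (0 + 1) (0 + 1) =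
        (q⁻¹ ^ 2 * γ / (q ^ 2 - 1)) • X - (q ^ 2 * β / (q ^ 2 - 1)) • Y +
          (q⁻¹ ^ 2 * α / (q ^ 2 - 1)) • Z := by
      rw [pow_one, OmegaElt', Mn]
      simp only [zero_add, pow_one, mul_assoc]
      match_scalars <;> ring
    rw [e]
    exact add_mem (sub_mem (Submodule.smul_mem _ _ hX) (Submodule.smul_mem _ _ hY))
      (Submodule.smul_mem _ _ hZ)
  | succ n ih =>
    obtain ⟨r, hr, hΩ⟩ := ih
    obtain ⟨r', hr', hM⟩ := MulXYZ α β γ hq (n + 1) (n + 1) (n + 1)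
    have hcoef : (q⁻¹ : K) ^ ((n + 2) * (n + 3)) =
        q⁻¹ ^ ((n + 1) * (n + 2)) * (q⁻¹ ^ 2 * q⁻¹ ^ (2 * (n + 1))) := by
      rw [← pow_add, ← pow_add]; congr 1; ring
    set M := Mn q α β γ (n + 1) (n + 1) (n + 1) with hMdef
    refine ⟨q⁻¹ ^ ((n + 1) * (n + 2)) • (q⁻¹ ^ 2 • r' +
        (q⁻¹ ^ 2 * γ / (q ^ 2 - 1)) • (M * X) - (q ^ 2 * β / (q ^ 2 - 1)) • (M * Y) +
        (q⁻¹ ^ 2 * α / (q ^ 2 - 1)) • (M * Z)) + r * OmegaElt' q α β γ, ?_, ?_⟩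
    · have hMX : M * X ∈ Sp q α β γ (3 * (n + 1) + 2) :=
        Sp_mono q α β γ (show 3 * n + 3 + 1 ≤ 3 * (n + 1) + 2 by omega)
          (mem_mulX α β γ hq (Mn_mem q α β γ (show (n+1)+(n+1)+(n+1) ≤ 3 * n + 3 by omega)))
      have hMY : M * Y ∈ Sp q α β γ (3 * (n + 1) + 2) :=
        Sp_mono q α β γ (show 3 * n + 3 + 1 ≤ 3 * (n + 1) + 2 by omega)
          (mem_mulY α β γ hq (Mn_mem q α β γ (show (n+1)+(n+1)+(n+1) ≤ 3 * n + 3 by omega)))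
      have hMZ : M * Z ∈ Sp q α β γ (3 * (n + 1) + 2) :=
        Sp_mono q α β γ (show 3 * n + 3 + 1 ≤ 3 * (n + 1) + 2 by omega)
          (mem_mulZ α β γ (Mn_mem q α β γ (show (n+1)+(n+1)+(n+1) ≤ 3 * n + 3 by omega)))
      have hr'' : r' ∈ Sp q α β γ (3 * (n + 1) + 2) := Sp_mono q α β γ (by omega) hr'
      have hrΩ : r * OmegaElt' q α β γ ∈ Sp q α β γ (3 * (n + 1) + 2) :=
        Sp_mono q α β γ (by omega) (mem_mulOmega α β γ hq hr)
      exact add_mem (Submodule.smul_mem _ _ (add_mem (sub_mem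
        (add_mem (Submodule.smul_mem _ _ hr'') (Submodule.smul_mem _ _ hMX))
        (Submodule.smul_mem _ _ hMY)) (Submodule.smul_mem _ _ hMZ))) hrΩ
    · have e1 : OmegaElt' q α β γ ^ (n + 1 + 1) =
          OmegaElt' q α β γ ^ (n + 1) * OmegaElt' q α β γ := pow_succ _ _
      rw [e1, hΩ, add_mul, smul_mul_assoc]
      rw [show M * OmegaElt' q α β γ = q⁻¹ ^ 2 • (M * (X * Y * Z)) +
          (q⁻¹ ^ 2 * γ / (q ^ 2 - 1)) • (M * X) - (q ^ 2 * β / (q ^ 2 - 1)) • (M * Y) +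
          (q⁻¹ ^ 2 * α / (q ^ 2 - 1)) • (M * Z) by
        rw [OmegaElt']
        simp only [mul_add, mul_sub, mul_smul_comm]]
      rw [hM, hcoef]
      match_scalars <;> ring

end Aux

/-- For any `n ≥ 1`, expressed in the PBW monomials `xᵃyᵇzᶜ`, the leading term of `Ωⁿ` is
`(q⁻²)^{n(n+1)/2} xⁿyⁿzⁿ = q^{-n(n+1)} xⁿyⁿzⁿ`: all other terms have total degree `< 3n`. -/
theorem stmt19 (q α β γ : K) (hq : q ≠ 0) (hq2 : q ^ 2 ≠ 1) (n : ℕ) (hn : 1 ≤ n) :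
    ∃ c : (ℕ × ℕ × ℕ) →₀ K,
      (∀ p ∈ c.support, p.1 + p.2.1 + p.2.2 < 3 * n) ∧
      OmegaElt' q α β γ ^ n =
        (q⁻¹ ^ (n * (n + 1))) • (Xg q α β γ ^ n * Yg q α β γ ^ n * Zg q α β γ ^ n) +
          c.sum fun p coeff => coeff • (Xg q α β γ ^ p.1 * Yg q α β γ ^ p.2.1 *
            Zg q α β γ ^ p.2.2) := by
  obtain ⟨m, rfl⟩ : ∃ m, n = m + 1 := ⟨n - 1, by omega⟩
  obtain ⟨r, hr, h⟩ := key α β γ hq m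
  rw [Sp, Finsupp.mem_span_image_iff_linearCombination] at hr
  obtain ⟨l, hl, hlr⟩ := hr
  refine ⟨l, fun p hp => ?_, ?_⟩
  · have := hl hp
    simp only [Set.mem_setOf_eq] at this
    omega
  · rw [h, ← hlr, Finsupp.linearCombination_apply, Finsupp.sum]
    simp only [Mn, mul_assoc]
    rfl
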